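/- Let x_1,...,x_n be real numbers with empirical mean μ = (1/n)Σx_i and empirical standard deviation σ = sqrt((1/n)Σ(x_i-μ)²) > 0. Then for any subset S ⊆ {1,...,n} of size m, |Σ_{i∈S} (x_i - μ)/σ| ≤ sqrt(m·(n-m)). -/

import Mathlib

/-- Standardized-sum bound: for real numbers `x 1, ..., x n` with empirical mean `μ`
and positive empirical standard deviation `σ`, and any subset `S` of size `m`,
`|∑ i in S, (x i - μ)/σ| ≤ √(m(n-m))`. -/
theorem standardized_sum_bound (n : ℕ) (hn : 0 < n) (x : Fin n → ℝ) (μ σ : ℝ)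
    (hμ : μ = (∑ i, x i) / n)
    (hσdef : σ = Real.sqrt ((∑ i, (x i - μ) ^ 2) / n))
    (hσ : 0 < σ)
    (S : Finset (Fin n)) (m : ℕ) (hm : S.card = m) :
    |∑ i ∈ S, (x i - μ) / σ| ≤ Real.sqrt (m * (n - m)) := by
  have hmn : m ≤ n := by
    have := S.card_le_univ
    simpa [hm] using this
  have hmnR : (m : ℝ) ≤ n := by exact_mod_cast hmn
  have hnR : (0:ℝ) < n := by exact_mod_cast hn
  set y : Fin n → ℝ := fun i => x i - μ with hy
  have h0 : ∑ i, y i = 0 := by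
    simp only [hy, Finset.sum_sub_distrib, Finset.sum_const, Finset.card_univ,
      Fintype.card_fin, nsmul_eq_mul, hμ]
    field_simp
    ring
  have hnn : (0:ℝ) ≤ (∑ i, (x i - μ) ^ 2) / n := by positivity
  have hσ2 : (n:ℝ) * σ ^ 2 = ∑ i, y i ^ 2 := by
    rw [hσdef, Real.sq_sqrt hnn]
    field_simp [hy]
    rfl
  have hcompl : ∑ i ∈ Sᶜ, y i = - ∑ i ∈ S, y i := by
    have h := Finset.sum_add_sum_compl S y
    rw [h0] at h
    linarith
  have h1 : (∑ i ∈ S, y i) ^ 2 ≤ (m : ℝ) * ∑ i ∈ S, y i ^ 2 := by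
    have := sq_sum_le_card_mul_sum_sq (s := S) (f := y)
    rwa [hm] at this
  have h2 : (∑ i ∈ S, y i) ^ 2 ≤ ((n : ℝ) - m) * ∑ i ∈ Sᶜ, y i ^ 2 := by
    have := sq_sum_le_card_mul_sum_sq (s := Sᶜ) (f := y)
    rw [hcompl, neg_sq] at this
    have hc : (Sᶜ.card : ℝ) = (n : ℝ) - m := by
      rw [Finset.card_compl, hm, Fintype.card_fin]
      push_cast [hmn]
      ring
    rwa [hc] at this
  have hsplit : ∑ i ∈ S, y i ^ 2 + ∑ i ∈ Sᶜ, y i ^ 2 = (n:ℝ) * σ ^ 2 := by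
    rw [hσ2]; exact Finset.sum_add_sum_compl S _
  set T := ∑ i ∈ S, y i with hT
  have hkey : T ^ 2 ≤ (m : ℝ) * ((n : ℝ) - m) * σ ^ 2 := by
    have hA : (0:ℝ) ≤ ((n:ℝ) - m) := by linarith
    have hB : (0:ℝ) ≤ (m:ℝ) := by positivity
    have hn' : (n:ℝ) * T ^ 2 ≤ (n:ℝ) * ((m : ℝ) * ((n : ℝ) - m) * σ ^ 2) := by
      have hsp2 : (m:ℝ) * ((n:ℝ) - m) * (∑ i ∈ S, y i ^ 2 + ∑ i ∈ Sᶜ, y i ^ 2)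
          = (m:ℝ) * ((n:ℝ) - m) * ((n:ℝ) * σ ^ 2) := by rw [hsplit]
      nlinarith [mul_le_mul_of_nonneg_left h1 hA, mul_le_mul_of_nonneg_left h2 hB, hsp2]
    exact le_of_mul_le_mul_left hn' hnR
  have habs : |T| ≤ Real.sqrt ((m : ℝ) * ((n : ℝ) - m)) * σ := by
    have : |T| = Real.sqrt (T ^ 2) := (Real.sqrt_sq_eq_abs T).symm
    rw [this]
    calc Real.sqrt (T ^ 2) ≤ Real.sqrt ((m : ℝ) * ((n : ℝ) - m) * σ ^ 2) :=
          Real.sqrt_le_sqrt hkey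
      _ = Real.sqrt ((m : ℝ) * ((n : ℝ) - m)) * σ := by
          rw [Real.sqrt_mul' _ (by positivity : (0:ℝ) ≤ σ ^ 2)]
          · rw [Real.sqrt_sq hσ.le]
  have : ∑ i ∈ S, (x i - μ) / σ = T / σ := by
    rw [hT, hy, Finset.sum_div]
  rw [this, abs_div, abs_of_pos hσ, div_le_iff₀ hσ]
  exact habs
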